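/- Let f₁, …, f_s : ℤ_m → ℤ_m be 1-Lipschitz functions that are uniform with each suffix. Then for all fixed j, d, k ∈ ℕ, β ∈ {0,…,m^d−1}, a ∈ {0,…,m^k−1}^s, the conditional probability μ(⋃_{i=j}^n {φᵢ ∈ J_k(a)} | ξ_d = β) tends to 1 as n → ∞. -/

import Mathlib

open MeasureTheory ProbabilityTheory Filter

/-- The ring `ℤ_m` of `m`-adic integers, modelled as base-`m` digit sequences. -/
abbrev Zm (m : ℕ) := ℕ → Fin m

/-- `ω mod m^n`: the natural number formed by the first `n` base-`m` digits of `ω`. -/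
def modPow {m : ℕ} (ω : Zm m) (n : ℕ) : ℕ :=
  ∑ i ∈ Finset.range n, (ω i).val * m ^ i

/-- `f : ℤ_m → ℤ_m` is 1-Lipschitz: the first `n` digits of `f ω` depend only
on the first `n` digits of `ω`. -/
def Lip1 {m : ℕ} (f : Zm m → Zm m) : Prop :=
  ∀ (n : ℕ) (ω₁ ω₂ : Zm m), modPow ω₁ n = modPow ω₂ n → modPow (f ω₁) n = modPow (f ω₂) n

/-- `μ` is the normalized Haar measure on `ℤ_m`: every ball
`{ω : ω mod m^k = a}` has measure `m^{-k}`. -/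
def IsHaar {m : ℕ} (μ : Measure (Zm m)) : Prop :=
  ∀ (k a : ℕ), a < m ^ k → μ {ω | modPow ω k = a} = ((m : ENNReal) ^ k)⁻¹

/-- The vector `φₙ(ω) = ((f₁(ω) mod m^n)/m^n, …, (f_s(ω) mod m^n)/m^n)`. -/
noncomputable def phi {m s : ℕ} (f : Fin s → Zm m → Zm m) (n : ℕ) (ω : Zm m) :
    Fin s → ℝ :=
  fun i => (modPow (f i ω) n : ℝ) / (m : ℝ) ^ n

/-- The cube `J_k(a) = ∏ᵢ [aᵢ/m^k, (aᵢ+1)/m^k) ⊂ [0,1)^s`. -/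
def Jcube (m k : ℕ) {s : ℕ} (a : Fin s → ℕ) : Set (Fin s → ℝ) :=
  {x | ∀ i, (a i : ℝ) / (m : ℝ) ^ k ≤ x i ∧ x i < ((a i : ℝ) + 1) / (m : ℝ) ^ k}

/-- The suffix event `ξ_d = β`, i.e. `ω mod m^d = β`. -/
def suffixEvent (m d β : ℕ) : Set (Zm m) := {ω | modPow ω d = β}

/-- The uniform (Lebesgue) probability distribution on the cube `[0,1)^s`. -/
noncomputable def unifCube (s : ℕ) : Measure (Fin s → ℝ) :=
  volume.restrict (Set.univ.pi fun _ => Set.Ico (0 : ℝ) 1)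

/-- The collection `f₁,…,f_s` generates a uniform distribution: `φₙ` converges
weakly to the uniform distribution on `[0,1)^s`. -/
def GeneratesUniform {m s : ℕ} (μ : Measure (Zm m)) (f : Fin s → Zm m → Zm m) : Prop :=
  ∀ g : BoundedContinuousFunction (Fin s → ℝ) ℝ,
    Tendsto (fun n => ∫ ω, g (phi f n ω) ∂μ) atTop (nhds (∫ x, g x ∂(unifCube s)))

/-- The collection `f₁,…,f_s` is uniform with each suffix: conditionally on
`ξ_d = β`, the probability that `φₙ` hits any cube `J_k(a)` tends to `m^{-ks}`. -/
def UniformWithSuffix {m s : ℕ} (μ : Measure (Zm m)) (f : Fin s → Zm m → Zm m) : Prop :=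
  ∀ (k d : ℕ) (a : Fin s → ℕ), (∀ i, a i < m ^ k) → ∀ β < m ^ d,
    Tendsto
      (fun n => ProbabilityTheory.cond μ (suffixEvent m d β) {ω | phi f n ω ∈ Jcube m k a})
      atTop (nhds (((m : ENNReal) ^ (k * s))⁻¹))

lemma modPow_lt {m : ℕ} (hm : 0 < m) (ω : Zm m) (n : ℕ) : modPow ω n < m ^ n := by
  induction n with
  | zero => simp [modPow]
  | succ n ih =>
    have h1 : (ω n).val ≤ m - 1 := Nat.le_pred_of_lt (ω n).isLt
    have h2 : (ω n).val * m ^ n ≤ (m - 1) * m ^ n := Nat.mul_le_mul_right _ h1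
    have h3 : m ^ n + (m - 1) * m ^ n = m ^ (n + 1) := by
      have hm' : 1 + (m - 1) = m := by omega
      calc m ^ n + (m - 1) * m ^ n = (1 + (m - 1)) * m ^ n := by ring
        _ = m * m ^ n := by rw [hm']
        _ = m ^ (n + 1) := by rw [pow_succ]; ring
    rw [modPow, Finset.sum_range_succ, ← modPow]
    omega

lemma modPow_mod {m : ℕ} (hm : 0 < m) (ω : Zm m) {i M : ℕ} (h : i ≤ M) :
    modPow ω M % m ^ i = modPow ω i := by
  have hdvd : m ^ i ∣ ∑ t ∈ Finset.Ico i M, (ω t).val * m ^ t := by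
    refine Finset.dvd_sum fun t ht => ?_
    exact Dvd.dvd.mul_left (pow_dvd_pow m (Finset.mem_Ico.mp ht).1) _
  obtain ⟨c, hc⟩ := hdvd
  have hsplit : modPow ω M = modPow ω i + m ^ i * c := by
    simp only [modPow, Finset.range_eq_Ico, ← hc]
    exact (Finset.sum_Ico_consecutive _ (Nat.zero_le i) h).symm
  rw [hsplit, Nat.add_mul_mod_self_left, Nat.mod_eq_of_lt (modPow_lt hm ω i)]

def natToZm (m : ℕ) (hm : 0 < m) (q : ℕ) : Zm m :=
  fun i => ⟨q / m ^ i % m, Nat.mod_lt _ hm⟩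

lemma modPow_natToZm {m : ℕ} (hm : 0 < m) (q n : ℕ) :
    modPow (natToZm m hm q) n = q % m ^ n := by
  induction n with
  | zero => simp [modPow, Nat.mod_one]
  | succ n ih =>
    rw [modPow, Finset.sum_range_succ, ← modPow, ih, Nat.mod_pow_succ, natToZm]
    ring

lemma measurable_modPow {m n : ℕ} : Measurable fun ω : Zm m => modPow ω n := by
  unfold modPow
  exact Finset.measurable_sum _ fun i _ =>
    (measurable_from_top.comp (measurable_pi_apply i)).mul measurable_const

lemma measurableSet_suffixEvent {m d β : ℕ} : MeasurableSet (suffixEvent m d β) :=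
  measurable_modPow (measurableSet_singleton β)

lemma measurable_modPow_comp {m : ℕ} (hm : 0 < m) {f : Zm m → Zm m} (hf : Lip1 f) (n : ℕ) :
    Measurable fun ω => modPow (f ω) n := by
  have key : ∀ ω, modPow (f ω) n = modPow (f (natToZm m hm (modPow ω n))) n := by
    intro ω
    refine hf n ω _ ?_
    rw [modPow_natToZm, Nat.mod_eq_of_lt (modPow_lt hm ω n)]
  have heq : (fun ω => modPow (f ω) n)
      = (fun q => modPow (f (natToZm m hm q)) n) ∘ (fun ω => modPow ω n) :=
    funext fun ω => key ω
  rw [heq]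
  exact measurable_from_top.comp measurable_modPow



lemma phi_congr {m s : ℕ} (hm : 0 < m) {f : Fin s → Zm m → Zm m} (hf : ∀ i, Lip1 (f i))
    {n M : ℕ} (hnM : n ≤ M) {ω ω' : Zm m} (h : modPow ω M = modPow ω' M) :
    phi f n ω = phi f n ω' := by
  funext t
  have h1 : modPow ω n = modPow ω' n := by
    rw [← modPow_mod hm ω hnM, ← modPow_mod hm ω' hnM, h]
  simp only [phi, hf t n ω ω' h1]

lemma measurableSet_phiEvent {m s : ℕ} (hm : 0 < m) {f : Fin s → Zm m → Zm m}
    (hf : ∀ i, Lip1 (f i)) (n k : ℕ) (a : Fin s → ℕ) :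
    MeasurableSet {ω | phi f n ω ∈ Jcube m k a} := by
  have heq : {ω | phi f n ω ∈ Jcube m k a}
      = ⋂ t, (fun ω => modPow (f t ω) n) ⁻¹'
          {q : ℕ | (a t : ℝ) / (m : ℝ) ^ k ≤ (q : ℝ) / (m : ℝ) ^ n ∧
            (q : ℝ) / (m : ℝ) ^ n < ((a t : ℝ) + 1) / (m : ℝ) ^ k} := by
    ext ω
    simp [Jcube, phi, Set.mem_iInter]
  rw [heq]
  exact MeasurableSet.iInter fun t =>
    measurable_modPow_comp hm (hf t) n ((Set.to_countable _).measurableSet)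

lemma levy_step {m s : ℕ} (hm : 1 < m) (μ : Measure (Zm m)) [IsProbabilityMeasure μ]
    (hμ : IsHaar μ) {f : Fin s → Zm m → Zm m} (hf : ∀ i, Lip1 (f i))
    (h : UniformWithSuffix μ f) (k : ℕ) (a : Fin s → ℕ) (ha : ∀ i, a i < m ^ k)
    (C : Set (Zm m)) (M : ℕ)
    (hC : ∀ ω ω', modPow ω M = modPow ω' M → (ω ∈ C ↔ ω' ∈ C)) :
    ∃ n, M < n ∧
      μ (C ∩ {ω | phi f n ω ∈ Jcube m k a}ᶜ)
        ≤ (1 - ((m : ENNReal) ^ (k * s))⁻¹ / 2) * μ C := by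
  classical
  have hm0 : 0 < m := lt_trans one_pos hm
  set c : ENNReal := ((m : ENNReal) ^ (k * s))⁻¹ with hcdef
  have hmE : (m : ENNReal) ≠ 0 := by
    simp only [ne_eq, Nat.cast_eq_zero]; omega
  have hmtop : (m : ENNReal) ≠ ⊤ := ENNReal.natCast_ne_top m
  have hc0 : c ≠ 0 := ENNReal.inv_ne_zero.mpr (ENNReal.pow_ne_top hmtop)
  have hctop : c ≠ ⊤ := ENNReal.inv_ne_top.mpr (pow_ne_zero _ hmE)
  have hc1 : c ≤ 1 := by
    rw [hcdef, ENNReal.inv_le_one]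
    exact one_le_pow_of_one_le' (by exact_mod_cast Nat.one_le_cast.mpr hm.le) _
  set δ : ENNReal := 1 - c / 2 with hδdef
  have hδc : δ + c / 2 = 1 := tsub_add_cancel_of_le (le_trans ENNReal.half_le_self hc1)
  set F : Finset ℕ :=
    (Finset.range (m ^ M)).filter (fun γ => ∃ ω, modPow ω M = γ ∧ ω ∈ C) with hFdef
  have hdecomp : C = ⋃ γ ∈ F, suffixEvent m M γ := by
    ext ω
    simp only [Set.mem_iUnion, Finset.mem_filter, Finset.mem_range, suffixEvent,
      Set.mem_setOf_eq, exists_prop, hFdef]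
    constructor
    · intro hω
      exact ⟨modPow ω M, ⟨modPow_lt hm0 ω M, ω, rfl, hω⟩, rfl⟩
    · rintro ⟨γ, ⟨-, ω', hω', hC'⟩, hγ⟩
      exact (hC ω' ω (by rw [hω', hγ])).mp hC'
  have hev : ∀ᶠ n in atTop, ∀ γ ∈ Finset.range (m ^ M),
      c / 2 < ProbabilityTheory.cond μ (suffixEvent m M γ)
        {ω | phi f n ω ∈ Jcube m k a} := by
    rw [eventually_all_finset]
    intro γ hγ
    exact (h k M a ha γ (Finset.mem_range.mp hγ)).eventually
      (eventually_gt_nhds (ENNReal.half_lt_self hc0 hctop))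
  obtain ⟨n, hn1, hn2⟩ := (hev.and (eventually_gt_atTop M)).exists
  refine ⟨n, hn2, ?_⟩
  have hEmeas : MeasurableSet {ω | phi f n ω ∈ Jcube m k a} :=
    measurableSet_phiEvent hm0 hf n k a
  have hbound : ∀ γ ∈ F, μ (suffixEvent m M γ ∩ {ω | phi f n ω ∈ Jcube m k a}ᶜ)
      ≤ δ * μ (suffixEvent m M γ) := by
    intro γ hγF
    have hγ : γ < m ^ M := Finset.mem_range.mp (Finset.mem_filter.mp hγF).1
    set S := suffixEvent m M γ with hSdef
    have hSμ : μ S = ((m : ENNReal) ^ M)⁻¹ := hμ M γ hγ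
    have hS0 : μ S ≠ 0 := by
      rw [hSμ]; exact ENNReal.inv_ne_zero.mpr (ENNReal.pow_ne_top hmtop)
    have hStop : μ S ≠ ⊤ := by
      rw [hSμ]; exact ENNReal.inv_ne_top.mpr (pow_ne_zero _ hmE)
    have hcond := hn1 γ (Finset.mem_range.mpr hγ)
    have hint : μ (S ∩ {ω | phi f n ω ∈ Jcube m k a})
        = μ S * ProbabilityTheory.cond μ S {ω | phi f n ω ∈ Jcube m k a} := by
      rw [ProbabilityTheory.cond_apply measurableSet_suffixEvent, ← mul_assoc,
        ENNReal.mul_inv_cancel hS0 hStop, one_mul]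
    have hge : c / 2 * μ S ≤ μ (S ∩ {ω | phi f n ω ∈ Jcube m k a}) := by
      rw [hint, mul_comm]
      exact mul_le_mul_right hcond.le _
    have hsplit : μ (S ∩ {ω | phi f n ω ∈ Jcube m k a})
        + μ (S ∩ {ω | phi f n ω ∈ Jcube m k a}ᶜ) = μ S := by
      rw [← Set.diff_eq]
      exact measure_inter_add_diff S hEmeas
    have heqsub : μ (S ∩ {ω | phi f n ω ∈ Jcube m k a}ᶜ)
        = μ S - μ (S ∩ {ω | phi f n ω ∈ Jcube m k a}) := by
      refine ENNReal.eq_sub_of_add_eq ?_ ?_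
      · exact ne_top_of_le_ne_top hStop (measure_mono Set.inter_subset_left)
      · rw [add_comm]; exact hsplit
    rw [heqsub]
    refine le_trans (tsub_le_tsub_left hge _) ?_
    rw [tsub_le_iff_right]
    exact le_of_eq (by rw [← add_mul, hδc, one_mul])
  have hdisj : (↑F : Set ℕ).PairwiseDisjoint
      (fun γ => suffixEvent m M γ ∩ {ω | phi f n ω ∈ Jcube m k a}ᶜ) := by
    intro γ₁ _ γ₂ _ hne
    refine Set.disjoint_left.mpr ?_
    rintro ω ⟨h1, -⟩ ⟨h2, -⟩
    exact hne (h1 ▸ h2 ▸ rfl)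
  have hdisjS : (↑F : Set ℕ).PairwiseDisjoint (fun γ => suffixEvent m M γ) := by
    intro γ₁ _ γ₂ _ hne
    refine Set.disjoint_left.mpr ?_
    rintro ω h1 h2
    exact hne (h1 ▸ h2 ▸ rfl)
  calc μ (C ∩ {ω | phi f n ω ∈ Jcube m k a}ᶜ)
      = μ (⋃ γ ∈ F, suffixEvent m M γ ∩ {ω | phi f n ω ∈ Jcube m k a}ᶜ) := by
        rw [hdecomp, Set.iUnion₂_inter]
    _ = ∑ γ ∈ F, μ (suffixEvent m M γ ∩ {ω | phi f n ω ∈ Jcube m k a}ᶜ) :=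
        measure_biUnion_finset hdisj
          (fun γ _ => measurableSet_suffixEvent.inter hEmeas.compl)
    _ ≤ ∑ γ ∈ F, δ * μ (suffixEvent m M γ) := Finset.sum_le_sum hbound
    _ = δ * ∑ γ ∈ F, μ (suffixEvent m M γ) := by rw [Finset.mul_sum]
    _ = δ * μ C := by
        rw [hdecomp, measure_biUnion_finset hdisjS (fun γ _ => measurableSet_suffixEvent)]

/-- If `f₁,…,f_s` is uniform with each suffix, then conditionally on
`ξ_d = β` the probability that `φᵢ ∈ J_k(a)` for at least one `i` with
`j ≤ i ≤ n` tends to `1` as `n → ∞`. -/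
theorem stmt12 (m s : ℕ) (hm : 1 < m) (hs : 1 ≤ s)
    (μ : Measure (Zm m)) [IsProbabilityMeasure μ] (hμ : IsHaar μ)
    (f : Fin s → Zm m → Zm m) (hf : ∀ i, Lip1 (f i))
    (h : UniformWithSuffix μ f)
    (j d k : ℕ) (β : ℕ) (hβ : β < m ^ d)
    (a : Fin s → ℕ) (ha : ∀ i, a i < m ^ k) :
    Tendsto
      (fun n => ProbabilityTheory.cond μ (suffixEvent m d β)
        (⋃ i ∈ Finset.Icc j n, {ω | phi f i ω ∈ Jcube m k a}))
      atTop (nhds 1) := by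
  classical
  have hm0 : 0 < m := lt_trans one_pos hm
  set B := suffixEvent m d β with hBdef
  set E : ℕ → Set (Zm m) := fun i => {ω | phi f i ω ∈ Jcube m k a} with hEdef
  set G : ℕ → Set (Zm m) := fun n => B ∩ ⋂ i ∈ Finset.Icc j n, (E i)ᶜ with hGdef
  set c : ENNReal := ((m : ENNReal) ^ (k * s))⁻¹ with hcdef
  set δ : ENNReal := 1 - c / 2 with hδdef
  have hmE : (m : ENNReal) ≠ 0 := by
    simp only [ne_eq, Nat.cast_eq_zero]; omega
  have hmtop : (m : ENNReal) ≠ ⊤ := ENNReal.natCast_ne_top m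
  have hc0 : c ≠ 0 := ENNReal.inv_ne_zero.mpr (ENNReal.pow_ne_top hmtop)
  have hδ1 : δ < 1 :=
    ENNReal.sub_lt_self ENNReal.one_ne_top one_ne_zero
      (ne_of_gt (ENNReal.half_pos hc0))
  have hBμ : μ B = ((m : ENNReal) ^ d)⁻¹ := hμ d β hβ
  have hB0 : μ B ≠ 0 := by
    rw [hBμ]; exact ENNReal.inv_ne_zero.mpr (ENNReal.pow_ne_top hmtop)
  have hBtop : μ B ≠ ⊤ := measure_ne_top μ B
  -- G is antitone
  have hGmono : ∀ {N n : ℕ}, N ≤ n → G n ⊆ G N := by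
    intro N n hNn ω hω
    obtain ⟨hωB, hωI⟩ := hω
    refine ⟨hωB, ?_⟩
    simp only [Set.mem_iInter] at hωI ⊢
    intro i hi
    exact hωI i (Finset.mem_Icc.mpr ⟨(Finset.mem_Icc.mp hi).1,
      le_trans (Finset.mem_Icc.mp hi).2 hNn⟩)
  -- key induction
  have key : ∀ L : ℕ, ∃ N, j ≤ N ∧ μ (G N) ≤ μ B * δ ^ L := by
    intro L
    induction L with
    | zero =>
      refine ⟨j, le_rfl, ?_⟩
      have hsub : G j ⊆ B := fun ω hω => hω.1
      simpa using measure_mono hsub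
    | succ L ih =>
      obtain ⟨N, hjN, hN⟩ := ih
      set M := max d N with hMdef
      have hdet : ∀ ω ω', modPow ω M = modPow ω' M → (ω ∈ G N ↔ ω' ∈ G N) := by
        intro ω ω' hmod
        have hB' : ω ∈ B ↔ ω' ∈ B := by
          simp only [hBdef, suffixEvent, Set.mem_setOf_eq]
          rw [← modPow_mod hm0 ω (le_max_left d N), ← modPow_mod hm0 ω' (le_max_left d N),
            hmod]
        have hE' : ∀ i, i ∈ Finset.Icc j N → (ω ∈ (E i)ᶜ ↔ ω' ∈ (E i)ᶜ) := by
          intro i hi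
          have hiM : i ≤ M := le_trans (Finset.mem_Icc.mp hi).2 (le_max_right d N)
          have hphi : phi f i ω = phi f i ω' := phi_congr hm0 hf hiM hmod
          simp only [hEdef, Set.mem_compl_iff, Set.mem_setOf_eq, hphi]
        simp only [hGdef, Set.mem_inter_iff, Set.mem_iInter]
        constructor
        · rintro ⟨h1, h2⟩
          exact ⟨hB'.mp h1, fun i hi => (hE' i hi).mp (h2 i hi)⟩
        · rintro ⟨h1, h2⟩
          exact ⟨hB'.mpr h1, fun i hi => (hE' i hi).mpr (h2 i hi)⟩
      obtain ⟨n, hMn, hstep⟩ := levy_step hm μ hμ hf h k a ha (G N) M hdet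
      have hjn : j ≤ n := le_trans hjN (le_trans (le_max_right d N) hMn.le)
      refine ⟨n, hjn, ?_⟩
      have hsub : G n ⊆ G N ∩ (E n)ᶜ := by
        intro ω hω
        obtain ⟨hωB, hωI⟩ := hω
        simp only [Set.mem_iInter] at hωI
        refine ⟨hGmono (le_trans (le_max_right d N) hMn.le) ⟨hωB, ?_⟩,
          hωI n (Finset.mem_Icc.mpr ⟨hjn, le_rfl⟩)⟩
        simp only [Set.mem_iInter]
        exact fun i hi => hωI i hi
      calc μ (G n) ≤ μ (G N ∩ (E n)ᶜ) := measure_mono hsub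
        _ ≤ δ * μ (G N) := hstep
        _ ≤ δ * (μ B * δ ^ L) := mul_le_mul_right hN _
        _ = μ B * δ ^ (L + 1) := by ring
  -- μ (G n) → 0
  have hzero : Tendsto (fun n => μ (G n)) atTop (nhds 0) := by
    rw [ENNReal.tendsto_atTop_zero]
    intro ε hε
    have hδtend : Tendsto (fun L : ℕ => μ B * δ ^ L) atTop (nhds 0) := by
      have h1 := ENNReal.tendsto_pow_atTop_nhds_zero_of_lt_one hδ1
      have h2 := ENNReal.Tendsto.const_mul h1 (Or.inr hBtop)
      simpa using h2
    obtain ⟨L0, hL0⟩ := (ENNReal.tendsto_atTop_zero.mp hδtend) ε hε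
    obtain ⟨N, hjN, hN⟩ := key L0
    refine ⟨N, fun n hn => ?_⟩
    exact le_trans (measure_mono (hGmono hn)) (le_trans hN (hL0 L0 le_rfl))
  -- conclude
  have hUmeas : ∀ n, MeasurableSet (⋃ i ∈ Finset.Icc j n, E i) := fun n =>
    (Finset.Icc j n : Finset ℕ).measurableSet_biUnion
      (fun i _ => measurableSet_phiEvent hm0 hf i k a)
  have hcompl : ∀ n, G n = B \ ⋃ i ∈ Finset.Icc j n, E i := by
    intro n
    rw [hGdef, Set.diff_eq]
    congr 1
    simp [Set.compl_iUnion]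
  have hGtop : ∀ n, μ (G n) ≠ ⊤ := fun n => measure_ne_top μ _
  have hcond : ∀ n, ProbabilityTheory.cond μ B (⋃ i ∈ Finset.Icc j n, E i)
      = (μ B)⁻¹ * (μ B - μ (G n)) := by
    intro n
    rw [ProbabilityTheory.cond_apply measurableSet_suffixEvent]
    congr 1
    have hsplit := measure_inter_add_diff B (hUmeas n) (μ := μ)
    rw [← hcompl n] at hsplit
    exact ENNReal.eq_sub_of_add_eq (hGtop n) hsplit
  simp only [hEdef] at hcond
  simp only [hcond]
  have h1 : Tendsto (fun n => μ B - μ (G n)) atTop (nhds (μ B)) := by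
    have hcont := (ENNReal.continuous_sub_left hBtop).tendsto 0
    have := hcont.comp hzero
    simpa [Function.comp_def] using this
  have h2 := ENNReal.Tendsto.const_mul (a := (μ B)⁻¹) h1 (Or.inr (by
    simp only [ne_eq, ENNReal.inv_eq_top]
    exact hB0))
  rwa [ENNReal.inv_mul_cancel hB0 hBtop] at h2
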